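/- arXiv:1109.4785 — 3 statements merged into one kernel-verified Lean document; each statement's English description precedes it below -/
import Mathlib

section
/- Let (X,μ) be a non-atomic probability space with tree T. For every I ∈ T and every a ∈ (0,1) there exists a subfamily F(I) ⊆ T of pairwise disjoint subsets of I such that Σ_{J ∈ F(I)} μ(J) = (1−a) μ(I). -/
open MeasureTheory Set Filter ENNReal

/-- The generations of a tree-like family: `gen child 0 = {univ}`,
`gen child (m+1) = ⋃_{I ∈ gen child m} child I`. -/
def gen {X : Type*} (child : Set X → Set (Set X)) : ℕ → Set (Set X)
  | 0 => {Set.univ}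
  | (m + 1) => ⋃ I ∈ gen child m, child I

/-- A tree on a measure space, in the sense of the theory of the dyadic maximal operator. -/
structure DyadicTree {X : Type*} [MeasurableSpace X] (μ : Measure X) where
  child : Set X → Set (Set X)
  mem : Set (Set X)
  univ_mem : Set.univ ∈ mem
  measurableSet : ∀ I ∈ mem, MeasurableSet I
  pos : ∀ I ∈ mem, 0 < μ I
  child_sub : ∀ I ∈ mem, child I ⊆ mem
  child_countable : ∀ I ∈ mem, (child I).Countable
  child_two : ∀ I ∈ mem, ∃ J K, J ∈ child I ∧ K ∈ child I ∧ J ≠ K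
  child_subset : ∀ I ∈ mem, ∀ J ∈ child I, J ⊆ I
  child_disjoint : ∀ I ∈ mem, (child I).Pairwise Disjoint
  child_union : ∀ I ∈ mem, ⋃₀ child I = I
  mem_eq : mem = ⋃ m, gen child m
  shrink : Filter.Tendsto (fun m => ⨆ I ∈ gen child m, μ I) Filter.atTop (nhds 0)

/-- The dyadic maximal operator associated to a family `T` of sets. -/
noncomputable def maximal {X : Type*} [MeasurableSpace X] (μ : Measure X)
    (T : Set (Set X)) (φ : X → ℝ) (x : X) : ℝ :=
  sSup {r : ℝ | ∃ I ∈ T, x ∈ I ∧ r = (∫ y in I, |φ y| ∂μ) / (μ I).toReal}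

/-- The decreasing rearrangement on `(0,1]` of a measurable function. -/
noncomputable def rearr {X : Type*} [MeasurableSpace X] (μ : Measure X)
    (ψ : X → ℝ) (t : ℝ) : ℝ :=
  sInf {s : ℝ | 0 ≤ s ∧ (μ {x | s < |ψ x|}).toReal ≤ t}

lemma step_lemma {X : Type*} [MeasurableSpace X] {μ : Measure X} [IsProbabilityMeasure μ]
    (T : DyadicTree μ) {K : Set X} (hK : K ∈ T.mem) {r : ℝ≥0∞} (hr : r < μ K) :
    ∃ (K' : Set X) (r' : ℝ≥0∞) (G : Set (Set X)),
      G ⊆ T.child K ∧ K' ∈ T.child K ∧ K' ∉ G ∧ r' < μ K' ∧ r = μ (⋃₀ G) + r' := by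
  classical
  obtain ⟨J1, J2, hJ1, hJ2, hne⟩ := T.child_two K hK
  obtain ⟨f, hf⟩ := (T.child_countable K hK).exists_eq_range ⟨J1, hJ1⟩
  have hfmem : ∀ i, f i ∈ T.child K := fun i => hf ▸ mem_range_self i
  set U : ℕ → Set X := fun n => ⋃ i ∈ Finset.range n, f i with hU
  have hUmono : Monotone U := fun m n hmn =>
    biUnion_subset_biUnion_left (Finset.range_subset_range.mpr hmn)
  have hUnion : ⋃ n, U n = K := by
    rw [← T.child_union K hK, hf, sUnion_range]
    ext x
    simp only [hU, mem_iUnion, Finset.mem_range]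
    constructor
    · rintro ⟨n, i, _, hx⟩; exact ⟨i, hx⟩
    · rintro ⟨i, hx⟩; exact ⟨i + 1, i, Nat.lt_succ_self i, hx⟩
  have htend : Tendsto (fun n => μ (U n)) atTop (nhds (μ K)) := by
    have := tendsto_measure_iUnion_atTop (μ := μ) hUmono
    rwa [hUnion] at this
  have hex : ∃ n, r < μ (U n) := by
    by_contra h
    push_neg at h
    exact absurd (le_of_tendsto' htend h) (not_le.mpr hr)
  set N := Nat.find hex with hNdef
  have hN : r < μ (U N) := Nat.find_spec hex
  have hNpos : N ≠ 0 := by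
    intro h
    rw [h] at hN
    simp [hU] at hN
  obtain ⟨M, hM⟩ : ∃ M, N = M + 1 :=
    ⟨N - 1, (Nat.succ_pred_eq_of_pos (Nat.pos_of_ne_zero hNpos)).symm⟩
  have hsM : μ (U M) ≤ r := not_lt.mp (Nat.find_min hex (by omega))
  have hUsucc : U (M + 1) = U M ∪ f M := by
    simp only [hU, Finset.range_add_one, Finset.mem_insert]
    ext x
    simp only [mem_iUnion, mem_union, Finset.mem_range]
    constructor
    · rintro ⟨i, hi | hi, hx⟩
      · exact Or.inr (hi ▸ hx)
      · exact Or.inl ⟨i, hi, hx⟩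
    · rintro (⟨i, hi, hx⟩ | hx)
      · exact ⟨i, Or.inr hi, hx⟩
      · exact ⟨M, Or.inl rfl, hx⟩
  have hsUG : ⋃₀ (f '' Set.Iio M) = U M := by
    ext x
    simp only [hU, mem_sUnion, mem_image, mem_Iio, mem_iUnion, Finset.mem_range]
    constructor
    · rintro ⟨_, ⟨i, hi, rfl⟩, hx⟩; exact ⟨i, hi, hx⟩
    · rintro ⟨i, hi, hx⟩; exact ⟨f i, ⟨i, hi, rfl⟩, hx⟩
  have hUMne : μ (U M) ≠ ⊤ := (hsM.trans_lt (hr.trans_le le_top)).ne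
  refine ⟨f M, r - μ (U M), f '' Set.Iio M, ?_, hfmem M, ?_, ?_, ?_⟩
  · rintro J ⟨i, _, rfl⟩; exact hfmem i
  · rintro ⟨i, hi, hfi⟩
    have hsub : f M ⊆ U M := by
      rw [← hfi]
      exact subset_biUnion_of_mem (Finset.mem_range.mpr hi)
    have : U (M + 1) = U M := by rw [hUsucc, union_eq_self_of_subset_right hsub]
    rw [hM, this] at hN
    exact absurd hN (not_lt.mpr hsM)
  · have h1 : r < μ (U M) + μ (f M) := by
      rw [hM] at hN
      exact hN.trans_le (by rw [hUsucc]; exact measure_union_le _ _)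
    rw [ENNReal.sub_lt_iff_lt_right hUMne hsM]
    rwa [add_comm] at h1
  · rw [hsUG]
    exact (add_tsub_cancel_of_le hsM).symm
/-- Lemma 2.1: for every `I` in a tree and `0 < a < 1` there is a disjoint subfamily
`F(I) ⊆ T` of subsets of `I` of total measure `(1-a) μ(I)`. -/
theorem stmt8 {X : Type*} [MeasurableSpace X] (μ : Measure X)
    [IsProbabilityMeasure μ] [NullSingletonClass μ] (T : DyadicTree μ)
    (I : Set X) (hI : I ∈ T.mem) (a : ℝ) (ha : a ∈ Set.Ioo (0:ℝ) 1) :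
    ∃ F : Set (Set X), F ⊆ T.mem ∧ F.Countable ∧ (∀ J ∈ F, J ⊆ I) ∧
      F.Pairwise Disjoint ∧
      ∑' J : F, μ (J : Set X) = ENNReal.ofReal (1 - a) * μ I := by
  classical
  set t : ℝ≥0∞ := ENNReal.ofReal (1 - a) * μ I with ht
  have ht_lt : t < μ I := by
    have h1 : ENNReal.ofReal (1 - a) < 1 := by
      rw [ENNReal.ofReal_lt_one]; linarith [ha.1]
    calc t < 1 * μ I := by
          rw [ht]
          exact ENNReal.mul_lt_mul_left (T.pos I hI).ne' (measure_ne_top μ I) h1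
      _ = μ I := one_mul _
  -- the state recursion
  have hstep : ∀ p : {p : Set X × ℝ≥0∞ // p.1 ∈ T.mem ∧ p.2 < μ p.1},
      ∃ q : {p : Set X × ℝ≥0∞ // p.1 ∈ T.mem ∧ p.2 < μ p.1}, ∃ G : Set (Set X),
      G ⊆ T.child p.1.1 ∧ q.1.1 ∈ T.child p.1.1 ∧ q.1.1 ∉ G ∧
        p.1.2 = μ (⋃₀ G) + q.1.2 := by
    rintro ⟨⟨K, r⟩, hK, hr⟩
    obtain ⟨K', r', G, hG, hK', hK'G, hr', heq⟩ := step_lemma T hK hr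
    exact ⟨⟨(K', r'), T.child_sub K hK hK', hr'⟩, G, hG, hK', hK'G, heq⟩
  choose nxt Gsel hG1 hG2 hG3 hG4 using hstep
  set st : ℕ → {p : Set X × ℝ≥0∞ // p.1 ∈ T.mem ∧ p.2 < μ p.1} :=
    fun m => nxt^[m] ⟨(I, t), hI, ht_lt⟩ with hst
  set K : ℕ → Set X := fun m => (st m).1.1 with hKdef
  set r : ℕ → ℝ≥0∞ := fun m => (st m).1.2 with hrdef
  set G : ℕ → Set (Set X) := fun m => Gsel (st m) with hGdef
  have hst_succ : ∀ m, st (m + 1) = nxt (st m) := fun m =>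
    Function.iterate_succ_apply' nxt m _
  have hKmem : ∀ m, K m ∈ T.mem := fun m => (st m).2.1
  have hrlt : ∀ m, r m < μ (K m) := fun m => (st m).2.2
  have hchild : ∀ m, K (m + 1) ∈ T.child (K m) := fun m => by
    simp only [hKdef, hst_succ]; exact hG2 (st m)
  have hGsub : ∀ m, G m ⊆ T.child (K m) := fun m => hG1 (st m)
  have hnotG : ∀ m, K (m + 1) ∉ G m := fun m => by
    simp only [hKdef, hGdef, hst_succ]; exact hG3 (st m)
  have hrec : ∀ m, r m = μ (⋃₀ G m) + r (m + 1) := fun m => by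
    simp only [hrdef, hGdef, hst_succ]; exact hG4 (st m)
  have hK0 : K 0 = I := rfl
  have hr0 : r 0 = t := rfl
  have hKstep : ∀ m, K (m + 1) ⊆ K m := fun m =>
    T.child_subset _ (hKmem m) _ (hchild m)
  have hKanti : ∀ {m n}, m ≤ n → K n ⊆ K m := by
    intro m n hmn
    induction n with
    | zero => rw [Nat.le_zero.mp hmn]
    | succ k ih =>
      rcases Nat.lt_or_ge m (k + 1) with h | h
      · exact (hKstep k).trans (ih (Nat.lt_succ_iff.mp h))
      · rw [Nat.le_antisymm hmn h]
  have hKI : ∀ m, K m ⊆ I := fun m => hK0 ▸ hKanti (Nat.zero_le m)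
  -- generations
  obtain ⟨m₀, hm₀⟩ : ∃ m₀, I ∈ gen T.child m₀ := by
    have := T.mem_eq ▸ hI
    exact mem_iUnion.mp this
  have hgen : ∀ m, K m ∈ gen T.child (m₀ + m) := by
    intro m
    induction m with
    | zero => exact hK0 ▸ hm₀
    | succ k ih =>
      show K (k + 1) ∈ gen T.child (m₀ + k + 1)
      exact mem_iUnion₂.mpr ⟨K k, ih, hchild k⟩
  have hrtend : Tendsto r atTop (nhds 0) := by
    have h1 : Tendsto (fun m => ⨆ J ∈ gen T.child (m₀ + m), μ J) atTop (nhds 0) := by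
      have h2 : Tendsto (fun m : ℕ => m₀ + m) atTop atTop :=
        tendsto_atTop_mono (fun m => Nat.le_add_left m m₀) tendsto_id
      exact T.shrink.comp h2
    refine tendsto_of_tendsto_of_tendsto_of_le_of_le tendsto_const_nhds h1
      (fun m => zero_le) (fun m => ?_)
    exact ((hrlt m).le).trans (le_biSup (fun J => μ J) (hgen m))
  have hpartial : ∀ n, (∑ m ∈ Finset.range n, μ (⋃₀ G m)) + r n = t := by
    intro n
    induction n with
    | zero => simp [hr0]
    | succ k ih =>
      rw [Finset.sum_range_succ, add_assoc, ← hrec k, ih]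
  have hS : ∑' m, μ (⋃₀ G m) = t := by
    have h2 := ENNReal.tendsto_nat_tsum (fun m => μ (⋃₀ G m))
    have h3 := h2.add hrtend
    rw [add_zero] at h3
    have h4 : Tendsto (fun n => (∑ m ∈ Finset.range n, μ (⋃₀ G m)) + r n)
        atTop (nhds t) := by
      simp only [hpartial]; exact tendsto_const_nhds
    exact tendsto_nhds_unique h3 h4
  -- disjointness
  have hGmem : ∀ m, ∀ J ∈ G m, J ∈ T.mem := fun m J hJ =>
    T.child_sub _ (hKmem m) (hGsub m hJ)
  have hGK : ∀ m, ∀ J ∈ G m, J ⊆ K m := fun m J hJ =>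
    T.child_subset _ (hKmem m) _ (hGsub m hJ)
  have hcross : ∀ m, ∀ J ∈ G m, Disjoint J (K (m + 1)) := by
    intro m J hJ
    exact T.child_disjoint _ (hKmem m) (hGsub m hJ) (hchild m)
      (fun h => hnotG m (h ▸ hJ))
  have hlt_disj : ∀ {m n}, m < n → ∀ J1 ∈ G m, ∀ J2 ∈ G n, Disjoint J1 J2 := by
    intro m n hmn J1 hJ1 J2 hJ2
    exact (hcross m J1 hJ1).mono_right ((hGK n J2 hJ2).trans (hKanti hmn))
  refine ⟨⋃ m, G m, ?_, ?_, ?_, ?_, ?_⟩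
  · rintro J hJ
    obtain ⟨m, hm⟩ := mem_iUnion.mp hJ
    exact hGmem m J hm
  · exact countable_iUnion fun m =>
      ((T.child_countable _ (hKmem m)).mono (hGsub m))
  · rintro J hJ
    obtain ⟨m, hm⟩ := mem_iUnion.mp hJ
    exact (hGK m J hm).trans (hKI m)
  · rintro J1 hJ1 J2 hJ2 hne
    obtain ⟨m, hm⟩ := mem_iUnion.mp hJ1
    obtain ⟨n, hn⟩ := mem_iUnion.mp hJ2
    rcases lt_trichotomy m n with h | h | h
    · exact hlt_disj h J1 hm J2 hn
    · subst h
      exact T.child_disjoint _ (hKmem m) (hGsub m hm) (hGsub m hn) hne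
    · exact (hlt_disj h J2 hn J1 hm).symm
  · have hFc : (⋃ m, G m).Countable := countable_iUnion fun m =>
      ((T.child_countable _ (hKmem m)).mono (hGsub m))
    have hFd : (⋃ m, G m).Pairwise Disjoint := by
      rintro J1 hJ1 J2 hJ2 hne
      obtain ⟨m, hm⟩ := mem_iUnion.mp hJ1
      obtain ⟨n, hn⟩ := mem_iUnion.mp hJ2
      rcases lt_trichotomy m n with h | h | h
      · exact hlt_disj h J1 hm J2 hn
      · subst h
        exact T.child_disjoint _ (hKmem m) (hGsub m hm) (hGsub m hn) hne
      · exact (hlt_disj h J2 hn J1 hm).symm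
    have hFm : ∀ J ∈ ⋃ m, G m, MeasurableSet J := by
      rintro J hJ
      obtain ⟨m, hm⟩ := mem_iUnion.mp hJ
      exact T.measurableSet J (hGmem m J hm)
    rw [← measure_sUnion hFc hFd hFm, sUnion_iUnion]
    rw [measure_iUnion ?_ ?_]
    · exact hS
    · intro m n hmn
      rcases lt_or_gt_of_ne hmn with h | h
      · refine disjoint_sUnion_left.mpr fun J1 hJ1 =>
          disjoint_sUnion_right.mpr fun J2 hJ2 => hlt_disj h J1 hJ1 J2 hJ2
      · refine disjoint_sUnion_left.mpr fun J1 hJ1 =>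
          disjoint_sUnion_right.mpr fun J2 hJ2 => (hlt_disj h J2 hJ2 J1 hJ1).symm
    · intro m
      exact MeasurableSet.sUnion ((T.child_countable _ (hKmem m)).mono (hGsub m))
        fun J hJ => T.measurableSet J (hGmem m J hJ)
end

section
/- Let p > 1 and 1 < q < p. Let f ∈ (0,1] and define ψ : (0,1] → [0,∞) by ψ(u) = ((p−1)/p) u^{−1/p} for 0 < u ≤ f^{p/(p−1)} and ψ(u) = 0 otherwise. Then ∫_0^1 ψ(u) du = f, sup_{λ>0} λ · |{ u ∈ (0,1] : ψ(u) ≥ λ }|^{1/p} = (p−1)/p, and for k ∈ (0,1]: ∫_0^k ((1/t) ∫_0^t ψ(u) du)^q dt equals (p/(p−q)) k^{1−q/p} if k ≤ f^{p/(p−1)}, and equals (q(p−1)/((p−q)(q−1))) f^{(p−q)/(p−1)} − (1/(q−1)) k^{1−q} f^q if f^{p/(p−1)} ≤ k ≤ 1. -/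
open MeasureTheory Set

lemma int_rpow_Ioc {r k : ℝ} (hr : -1 < r) (hk : 0 < k) :
    ∫ u in Set.Ioc (0:ℝ) k, u ^ r = k ^ (r + 1) / (r + 1) := by
  rw [← intervalIntegral.integral_of_le hk.le, integral_rpow (Or.inl hr),
    Real.zero_rpow (by linarith), sub_zero]

lemma int_rpow_seg {r a b : ℝ} (ha : 0 < a) (hab : a ≤ b) (hr : r ≠ -1) :
    ∫ u in Set.Ioc a b, u ^ r = (b ^ (r + 1) - a ^ (r + 1)) / (r + 1) := by
  rw [← intervalIntegral.integral_of_le hab, integral_rpow (Or.inr ⟨hr, by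
    simp only [Set.uIcc_of_le hab, Set.mem_Icc, not_and, not_le]
    intro h; linarith⟩)]

lemma intOn_rpow_Ioc {r k : ℝ} (hr : -1 < r) (hk : 0 < k) :
    IntegrableOn (fun u : ℝ => u ^ r) (Set.Ioc 0 k) := by
  have := intervalIntegral.intervalIntegrable_rpow' (a := (0:ℝ)) (b := k) hr
  rwa [intervalIntegrable_iff_integrableOn_Ioc_of_le hk.le] at this

lemma intOn_rpow_seg {r a b : ℝ} (ha : 0 < a) (hab : a ≤ b) :
    IntegrableOn (fun u : ℝ => u ^ r) (Set.Ioc a b) := by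
  have := intervalIntegral.intervalIntegrable_rpow (μ := volume) (a := a) (b := b) (r := r)
    (Or.inr (by
      simp only [Set.uIcc_of_le hab, Set.mem_Icc, not_and, not_le]
      intro h; linarith))
  rwa [intervalIntegrable_iff_integrableOn_Ioc_of_le hab] at this

/-- Properties of the extremal function `ψ(u) = ((p-1)/p) u^{-1/p}` on `(0, f^{p/(p-1)}]`:
its integral is `f`, its weak-`L^p` quasinorm is `(p-1)/p`, and the `q`-th power of its
Hardy averages integrates explicitly over `(0,k]`. -/
theorem stmt10 (p q : ℝ) (hp : 1 < p) (hq : 1 < q) (hqp : q < p)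
    (f : ℝ) (hf : f ∈ Set.Ioc (0:ℝ) 1)
    (ψ : ℝ → ℝ)
    (hψ : ∀ u : ℝ, ψ u = if u ≤ f ^ (p / (p - 1)) then ((p - 1) / p) * u ^ (-(1 / p)) else 0) :
    (∫ u in Set.Ioc (0:ℝ) 1, ψ u = f) ∧
    (sSup {r : ℝ | ∃ l : ℝ, 0 < l ∧
        r = l * (volume {u ∈ Set.Ioc (0:ℝ) 1 | l ≤ ψ u}).toReal ^ (1 / p)} = (p - 1) / p) ∧
    (∀ k ∈ Set.Ioc (0:ℝ) 1,
      (k ≤ f ^ (p / (p - 1)) →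
        ∫ t in Set.Ioc (0:ℝ) k, ((∫ u in Set.Ioc (0:ℝ) t, ψ u) / t) ^ q =
          (p / (p - q)) * k ^ (1 - q / p)) ∧
      (f ^ (p / (p - 1)) ≤ k →
        ∫ t in Set.Ioc (0:ℝ) k, ((∫ u in Set.Ioc (0:ℝ) t, ψ u) / t) ^ q =
          (q * (p - 1) / ((p - q) * (q - 1))) * f ^ ((p - q) / (p - 1)) -
            (1 / (q - 1)) * k ^ (1 - q) * f ^ q)) := by
  obtain ⟨hf0, hf1⟩ := hf
  have hp0 : (0:ℝ) < p := by linarith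
  have hp1 : (0:ℝ) < p - 1 := by linarith
  set c : ℝ := (p - 1) / p with hc_def
  set a : ℝ := f ^ (p / (p - 1)) with ha_def
  have hc0 : 0 < c := div_pos hp1 hp0
  have ha0 : 0 < a := Real.rpow_pos_of_pos hf0 _
  have ha1 : a ≤ 1 := Real.rpow_le_one hf0.le hf1 (by positivity)
  have haf : a ^ ((p - 1) / p) = f := by
    rw [ha_def, ← Real.rpow_mul hf0.le,
      show p / (p - 1) * ((p - 1) / p) = 1 by field_simp, Real.rpow_one]
  have hexp : (-1:ℝ) < -(1 / p) := by
    have : 1 / p < 1 := by rw [div_lt_one hp0]; linarith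
    linarith
  -- integral of ψ up to t ≤ a
  have hInt1 : ∀ t : ℝ, 0 < t → t ≤ a → ∫ u in Set.Ioc (0:ℝ) t, ψ u = t ^ ((p - 1) / p) := by
    intro t ht hta
    have heq : ∫ u in Set.Ioc (0:ℝ) t, ψ u = ∫ u in Set.Ioc (0:ℝ) t, c * u ^ (-(1 / p)) :=
      setIntegral_congr_fun measurableSet_Ioc (fun u hu => by rw [hψ, if_pos (hu.2.trans hta)])
    rw [heq, integral_const_mul, int_rpow_Ioc hexp ht,
      show -(1 / p) + 1 = (p - 1) / p by field_simp; ring]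
    rw [hc_def, mul_div_cancel₀ _ hc0.ne']
  have hIntOn1 : ∀ t : ℝ, 0 < t → t ≤ a → IntegrableOn ψ (Set.Ioc 0 t) := by
    intro t ht hta
    have h : IntegrableOn (fun u : ℝ => c * u ^ (-(1 / p))) (Set.Ioc 0 t) :=
      (intOn_rpow_Ioc hexp ht).const_mul c
    exact h.congr_fun
      (fun u hu => by rw [hψ, if_pos (hu.2.trans hta)]) measurableSet_Ioc
  have hzero : ∀ t : ℝ, a ≤ t → ∫ u in Set.Ioc a t, ψ u = 0 := by
    intro t hat
    rw [setIntegral_congr_fun measurableSet_Ioc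
      (g := fun _ => (0:ℝ)) (fun u hu => by rw [hψ, if_neg (not_le.2 hu.1)]), integral_zero]
  have hIntOn2 : ∀ t : ℝ, a ≤ t → IntegrableOn ψ (Set.Ioc a t) := by
    intro t hat
    have h : IntegrableOn (fun _ : ℝ => (0:ℝ)) (Set.Ioc a t) := integrableOn_zero
    exact h.congr_fun
      (fun u hu => by rw [hψ, if_neg (not_le.2 hu.1)]) measurableSet_Ioc
  have hInt2 : ∀ t : ℝ, a ≤ t → ∫ u in Set.Ioc (0:ℝ) t, ψ u = f := by
    intro t hat
    rw [← Set.Ioc_union_Ioc_eq_Ioc ha0.le hat,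
      setIntegral_union (Set.Ioc_disjoint_Ioc_of_le le_rfl) measurableSet_Ioc
        (hIntOn1 a ha0 le_rfl) (hIntOn2 t hat),
      hInt1 a ha0 le_rfl, hzero t hat, add_zero, haf]
  refine ⟨hInt2 1 ha1, ?_, ?_⟩
  · -- weak norm
    have hset : ∀ l : ℝ, 0 < l →
        {u ∈ Set.Ioc (0:ℝ) 1 | l ≤ ψ u} = Set.Ioc 0 (min a ((c / l) ^ p)) := by
      intro l hl
      ext u
      simp only [Set.mem_setOf_eq, Set.mem_Ioc, le_min_iff]
      constructor
      · rintro ⟨⟨hu0, hu1⟩, hlψ⟩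
        have hua : u ≤ a := by
          by_contra h
          rw [hψ, if_neg h] at hlψ; linarith
        refine ⟨hu0, hua, ?_⟩
        rw [hψ, if_pos hua] at hlψ
        have hup : (0:ℝ) < u ^ (1 / p) := Real.rpow_pos_of_pos hu0 _
        have h1 : u ^ (1 / p) ≤ c / l := by
          rw [le_div_iff₀ hl]
          have hmul : u ^ (1 / p) * u ^ (-(1 / p)) = 1 := by
            rw [← Real.rpow_add hu0]; simp
          calc u ^ (1 / p) * l ≤ u ^ (1 / p) * (c * u ^ (-(1 / p))) := by
                exact mul_le_mul_of_nonneg_left hlψ hup.le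
            _ = c * (u ^ (1 / p) * u ^ (-(1 / p))) := by ring
            _ = c := by rw [hmul, mul_one]
        have := Real.rpow_le_rpow (Real.rpow_nonneg hu0.le _) h1 hp0.le
        rwa [← Real.rpow_mul hu0.le, one_div, inv_mul_cancel₀ hp0.ne', Real.rpow_one] at this
      · rintro ⟨hu0, hua, hucl⟩
        refine ⟨⟨hu0, hua.trans ha1⟩, ?_⟩
        rw [hψ, if_pos hua]
        have hcl : (0:ℝ) ≤ c / l := by positivity
        have h1 : u ^ (1 / p) ≤ c / l := by
          have := Real.rpow_le_rpow hu0.le hucl (show (0:ℝ) ≤ 1 / p by positivity)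
          rwa [← Real.rpow_mul hcl, mul_one_div, div_self hp0.ne', Real.rpow_one] at this
        have hup : (0:ℝ) < u ^ (1 / p) := Real.rpow_pos_of_pos hu0 _
        rw [Real.rpow_neg hu0.le, ← div_eq_mul_inv, le_div_iff₀ hup]
        calc l * u ^ (1 / p) ≤ l * (c / l) := mul_le_mul_of_nonneg_left h1 hl.le
          _ = c := by field_simp
    have hval : ∀ l : ℝ, 0 < l →
        l * (volume {u ∈ Set.Ioc (0:ℝ) 1 | l ≤ ψ u}).toReal ^ (1 / p)
          = l * (min a ((c / l) ^ p)) ^ (1 / p) := by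
      intro l hl
      rw [hset l hl, Real.volume_Ioc, sub_zero, ENNReal.toReal_ofReal
        (le_min ha0.le (Real.rpow_nonneg (by positivity) _))]
    have hbound : ∀ r ∈ {r : ℝ | ∃ l : ℝ, 0 < l ∧
        r = l * (volume {u ∈ Set.Ioc (0:ℝ) 1 | l ≤ ψ u}).toReal ^ (1 / p)}, r ≤ c := by
      rintro r ⟨l, hl, rfl⟩
      rw [hval l hl]
      have hm : (min a ((c / l) ^ p)) ^ (1 / p) ≤ ((c / l) ^ p) ^ (1 / p) :=
        Real.rpow_le_rpow (le_min ha0.le (Real.rpow_nonneg (by positivity) _)) (min_le_right _ _)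
          (by positivity)
      have hcl : (0:ℝ) ≤ c / l := by positivity
      rw [← Real.rpow_mul hcl, mul_one_div, div_self hp0.ne', Real.rpow_one] at hm
      calc l * (min a ((c / l) ^ p)) ^ (1 / p) ≤ l * (c / l) :=
            mul_le_mul_of_nonneg_left hm hl.le
        _ = c := by field_simp
    have hmem : c ∈ {r : ℝ | ∃ l : ℝ, 0 < l ∧
        r = l * (volume {u ∈ Set.Ioc (0:ℝ) 1 | l ≤ ψ u}).toReal ^ (1 / p)} := by
      refine ⟨c / a ^ (1 / p), by positivity, ?_⟩
      rw [hval _ (by positivity)]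
      have hap : (0:ℝ) < a ^ (1 / p) := Real.rpow_pos_of_pos ha0 _
      have h1 : c / (c / a ^ (1 / p)) = a ^ (1 / p) := by field_simp
      have h2 : (a ^ (1 / p)) ^ p = a := by
        rw [← Real.rpow_mul ha0.le, one_div, inv_mul_cancel₀ hp0.ne', Real.rpow_one]
      rw [h1, h2, min_self]
      field_simp
    exact le_antisymm (csSup_le ⟨c, hmem⟩ hbound) (le_csSup ⟨c, hbound⟩ hmem)
  · -- Hardy averages
    intro k hk
    obtain ⟨hk0, hk1⟩ := hk
    have hpq : (0:ℝ) < p - q := by linarith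
    have hq1 : (0:ℝ) < q - 1 := by linarith
    have hexp2 : (-1:ℝ) < -(q / p) := by
      have : q / p < 1 := by rw [div_lt_one hp0]; linarith
      linarith
    have heq : ∀ t : ℝ, 0 < t → t ≤ a →
        ((∫ u in Set.Ioc (0:ℝ) t, ψ u) / t) ^ q = t ^ (-(q / p)) := by
      intro t ht0 hta
      rw [hInt1 t ht0 hta]
      have h1 : t ^ ((p - 1) / p) / t = t ^ ((p - 1) / p - 1) := by
        rw [Real.rpow_sub ht0, Real.rpow_one]
      rw [h1, ← Real.rpow_mul ht0.le]
      congr 1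
      field_simp
      ring
    have hcase1 : ∀ k' : ℝ, 0 < k' → k' ≤ a →
        ∫ t in Set.Ioc (0:ℝ) k', ((∫ u in Set.Ioc (0:ℝ) t, ψ u) / t) ^ q
          = (p / (p - q)) * k' ^ (1 - q / p) := by
      intro k' hk'0 hk'a
      rw [setIntegral_congr_fun measurableSet_Ioc
        (fun t ht => heq t ht.1 (ht.2.trans hk'a)), int_rpow_Ioc hexp2 hk'0,
        show -(q / p) + 1 = 1 - q / p from by ring]
      rw [show (1:ℝ) - q / p = (p - q) / p from by field_simp]
      field_simp
    constructor
    · exact fun hka => hcase1 k hk0 hka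
    · intro hak
      have heq2 : ∀ t ∈ Set.Ioc a k,
          ((∫ u in Set.Ioc (0:ℝ) t, ψ u) / t) ^ q = f ^ q * t ^ (-q) := by
        intro t ht
        have ht0 : 0 < t := ha0.trans ht.1
        rw [hInt2 t ht.1.le, Real.div_rpow hf0.le ht0.le, Real.rpow_neg ht0.le,
          div_eq_mul_inv]
      have hIg1 : IntegrableOn (fun t => ((∫ u in Set.Ioc (0:ℝ) t, ψ u) / t) ^ q)
          (Set.Ioc (0:ℝ) a) := by
        exact (intOn_rpow_Ioc hexp2 ha0).congr_fun
          (fun t ht => (heq t ht.1 ht.2).symm) measurableSet_Ioc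
      have hIg2 : IntegrableOn (fun t => ((∫ u in Set.Ioc (0:ℝ) t, ψ u) / t) ^ q)
          (Set.Ioc a k) := by
        have h : IntegrableOn (fun t : ℝ => f ^ q * t ^ (-q)) (Set.Ioc a k) :=
          (intOn_rpow_seg (r := -q) ha0 hak).const_mul (f ^ q)
        exact h.congr_fun (fun t ht => (heq2 t ht).symm) measurableSet_Ioc
      have hseg : ∫ t in Set.Ioc a k, ((∫ u in Set.Ioc (0:ℝ) t, ψ u) / t) ^ q
          = f ^ q * ((k ^ (1 - q) - a ^ (1 - q)) / (1 - q)) := by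
        rw [setIntegral_congr_fun measurableSet_Ioc heq2, integral_const_mul,
          int_rpow_seg ha0 hak (by intro h; rw [neg_eq_iff_eq_neg] at h; linarith),
          show -q + 1 = 1 - q from by ring]
      rw [← Set.Ioc_union_Ioc_eq_Ioc ha0.le hak,
        setIntegral_union (Set.Ioc_disjoint_Ioc_of_le le_rfl) measurableSet_Ioc hIg1 hIg2,
        hcase1 a ha0 le_rfl, hseg]
      have hFa : a ^ (1 - q / p) = f ^ ((p - q) / (p - 1)) := by
        rw [ha_def, ← Real.rpow_mul hf0.le]
        congr 1
        field_simp
      have hFq : f ^ q * a ^ (1 - q) = f ^ ((p - q) / (p - 1)) := by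
        rw [ha_def, ← Real.rpow_mul hf0.le, ← Real.rpow_add hf0]
        congr 1
        field_simp
        ring
      have expand : f ^ q * ((k ^ (1 - q) - a ^ (1 - q)) / (1 - q))
          = (f ^ q * k ^ (1 - q) - f ^ q * a ^ (1 - q)) / (1 - q) := by ring
      rw [expand, hFq, hFa]
      have h1q : (1:ℝ) - q ≠ 0 := by linarith
      field_simp
      ring
end

section
/- Let g, h : (0,1] → [0,∞) be non-increasing and integrable, G : [0,∞) → [0,∞) non-decreasing, and k ∈ (0,1]. For a ∈ (0,1) let m_a be the integer with (1−a)^{m_a+1} ≤ k < (1−a)^{m_a}. Then liminf_{a→0^+} Σ_{l≥0} G( (1−a)^{−(m_a+l)} ∫_0^{(1−a)^{m_a+l}} g(u) du ) ∫_{(1−a)^{m_a+l+1}}^{(1−a)^{m_a+l}} h(t) dt ≥ ∫_0^k G((1/t)∫_0^t g(u) du) h(t) dt. -/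
open MeasureTheory Set

open Filter

private lemma aux_sum (Φ h : ℝ → ℝ) (b : ℕ → ℝ) (q k : ℝ)
    (hq0 : 0 < q) (hq1 : q < 1)
    (hb1 : ∀ l, b l ∈ Set.Ioc (0:ℝ) 1)
    (hbs : ∀ l, b (l+1) = q * b l)
    (hb0 : Filter.Tendsto b Filter.atTop (nhds 0))
    (hkb : k ≤ b 0)
    (hΦ0 : ∀ t ∈ Set.Ioc (0:ℝ) 1, 0 ≤ Φ t)
    (hh0 : ∀ t ∈ Set.Ioc (0:ℝ) 1, 0 ≤ h t)
    (hhmono : AntitoneOn h (Set.Ioc 0 1))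
    (hhint : IntegrableOn h (Set.Ioc 0 1))
    (hcmp : ∀ l, ∀ t ∈ Set.Ioc (b (l+1)) (b l), Φ (b l) ≤ Φ t ∧ Φ t ≤ Φ (b (l+1)))
    (hFint : IntegrableOn (fun t => Φ t * h t) (Set.Ioc 0 1)) :
    q * (∫ t in Set.Ioc (0:ℝ) k, Φ t * h t) ≤
        (∑' l : ℕ, Φ (b l) * ∫ t in Set.Ioc (b (l+1)) (b l), h t) ∧
      (∑' l : ℕ, Φ (b l) * ∫ t in Set.Ioc (b (l+1)) (b l), h t) ≤
        ∫ t in Set.Ioc (0:ℝ) 1, Φ t * h t := by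
  have hbpos : ∀ l, 0 < b l := fun l => (hb1 l).1
  have hble1 : ∀ l, b l ≤ 1 := fun l => (hb1 l).2
  have hblt : ∀ l, b (l+1) < b l := by
    intro l; rw [hbs l]; nlinarith [hbpos l]
  have hbanti : Antitone b := antitone_nat_of_succ_le fun l => (hblt l).le
  have hsub01 : ∀ l, Set.Ioc (b (l+1)) (b l) ⊆ Set.Ioc 0 1 := fun l =>
    Set.Ioc_subset_Ioc (hbpos (l+1)).le (hble1 l)
  have hsub01' : ∀ n : ℕ, Set.Ioc (b n) (b 0) ⊆ Set.Ioc 0 1 := fun n =>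
    Set.Ioc_subset_Ioc (hbpos n).le (hble1 0)
  have hsub0b : Set.Ioc (0:ℝ) (b 0) ⊆ Set.Ioc 0 1 := Set.Ioc_subset_Ioc le_rfl (hble1 0)
  have hhintl : ∀ l, IntegrableOn h (Set.Ioc (b (l+1)) (b l)) := fun l =>
    hhint.mono_set (hsub01 l)
  have hFintl : ∀ l, IntegrableOn (fun t => Φ t * h t) (Set.Ioc (b (l+1)) (b l)) := fun l =>
    hFint.mono_set (hsub01 l)
  have hhInt0 : ∀ l, 0 ≤ ∫ t in Set.Ioc (b (l+1)) (b l), h t := fun l =>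
    setIntegral_nonneg measurableSet_Ioc fun t ht => hh0 t (hsub01 l ht)
  have hΦb0 : ∀ l, 0 ≤ Φ (b l) := fun l => hΦ0 _ (hb1 l)
  have hupper : ∀ l, Φ (b l) * (∫ t in Set.Ioc (b (l+1)) (b l), h t) ≤
      ∫ t in Set.Ioc (b (l+1)) (b l), Φ t * h t := by
    intro l
    rw [← integral_const_mul]
    refine setIntegral_mono_on ((hhintl l).const_mul _) (hFintl l) measurableSet_Ioc ?_
    intro t ht
    exact mul_le_mul_of_nonneg_right ((hcmp l t ht).1) (hh0 t (hsub01 l ht))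
  have hIocvol : ∀ {x y : ℝ}, x ≤ y → (volume (Set.Ioc x y)).toReal = y - x := by
    intro x y hxy; rw [Real.volume_Ioc, ENNReal.toReal_ofReal (by linarith)]
  have hlow2 : ∀ l, (∫ t in Set.Ioc (b (l+1)) (b l), h t) ≤ h (b (l+1)) * (b l - b (l+1)) := by
    intro l
    have := setIntegral_mono_on (hhintl l)
      (integrableOn_const measure_Ioc_lt_top.ne) measurableSet_Ioc
      (fun t ht => hhmono (hb1 (l+1)) (hsub01 l ht) ht.1.le)
    rwa [setIntegral_const, smul_eq_mul, measureReal_def, hIocvol (hblt l).le, mul_comm] at this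
  have hlow3 : ∀ l, h (b (l+1)) * (b (l+1) - b (l+2)) ≤
      ∫ t in Set.Ioc (b (l+2)) (b (l+1)), h t := by
    intro l
    have := setIntegral_mono_on (integrableOn_const measure_Ioc_lt_top.ne)
      (hhintl (l+1)) measurableSet_Ioc
      (fun t ht => hhmono (hsub01 (l+1) ht) (hb1 (l+1)) ht.2)
    rwa [setIntegral_const, smul_eq_mul, measureReal_def, hIocvol (hblt (l+1)).le, mul_comm] at this
  have hlower : ∀ l, q * ∫ t in Set.Ioc (b (l+1)) (b l), Φ t * h t ≤
      Φ (b (l+1)) * ∫ t in Set.Ioc (b (l+2)) (b (l+1)), h t := by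
    intro l
    have h1 : (∫ t in Set.Ioc (b (l+1)) (b l), Φ t * h t) ≤
        Φ (b (l+1)) * ∫ t in Set.Ioc (b (l+1)) (b l), h t := by
      rw [← integral_const_mul]
      refine setIntegral_mono_on (hFintl l) ((hhintl l).const_mul _) measurableSet_Ioc ?_
      intro t ht
      exact mul_le_mul_of_nonneg_right ((hcmp l t ht).2) (hh0 t (hsub01 l ht))
    have h2 := hlow2 l
    have h3 := hlow3 l
    have hh1 : 0 ≤ h (b (l+1)) := hh0 _ (hb1 (l+1))
    have hgap : b (l+1) - b (l+2) = q * (b l - b (l+1)) := by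
      have e1 := hbs (l+1); have e2 := hbs l
      rw [show l+2 = (l+1)+1 from rfl, e1, e2]; ring
    have hΦ1 : 0 ≤ Φ (b (l+1)) := hΦb0 (l+1)
    calc q * ∫ t in Set.Ioc (b (l+1)) (b l), Φ t * h t
        ≤ q * (Φ (b (l+1)) * ∫ t in Set.Ioc (b (l+1)) (b l), h t) :=
          mul_le_mul_of_nonneg_left h1 hq0.le
      _ ≤ q * (Φ (b (l+1)) * (h (b (l+1)) * (b l - b (l+1)))) :=
          mul_le_mul_of_nonneg_left (mul_le_mul_of_nonneg_left h2 hΦ1) hq0.le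
      _ = Φ (b (l+1)) * (h (b (l+1)) * (b (l+1) - b (l+2))) := by rw [hgap]; ring
      _ ≤ Φ (b (l+1)) * ∫ t in Set.Ioc (b (l+2)) (b (l+1)), h t :=
          mul_le_mul_of_nonneg_left h3 hΦ1
  have hpart : ∀ n : ℕ, (∑ l ∈ Finset.range n, ∫ t in Set.Ioc (b (l+1)) (b l), Φ t * h t) =
      ∫ t in Set.Ioc (b n) (b 0), Φ t * h t := by
    intro n
    induction n with
    | zero => simp
    | succ n ih =>
      rw [Finset.sum_range_succ, ih, add_comm,
        ← setIntegral_union (Set.Ioc_disjoint_Ioc_of_le le_rfl) measurableSet_Ioc (hFintl n)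
          (hFint.mono_set (hsub01' n)),
        Set.Ioc_union_Ioc_eq_Ioc (hblt n).le (hbanti (Nat.zero_le n))]
  have hF0' : ∀ t ∈ Set.Ioc (0:ℝ) 1, 0 ≤ Φ t * h t := fun t ht =>
    mul_nonneg (hΦ0 t ht) (hh0 t ht)
  have hFae : 0 ≤ᵐ[volume.restrict (Set.Ioc (0:ℝ) 1)] fun t => Φ t * h t :=
    (ae_restrict_iff' measurableSet_Ioc).2 (ae_of_all _ hF0')
  have hMb : ∀ n : ℕ, (∫ t in Set.Ioc (b n) (b 0), Φ t * h t) ≤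
      ∫ t in Set.Ioc (0:ℝ) 1, Φ t * h t := fun n =>
    setIntegral_mono_set hFint hFae ((hsub01' n).eventuallyLE)
  have hT0 : ∀ l, 0 ≤ Φ (b l) * ∫ t in Set.Ioc (b (l+1)) (b l), h t := fun l =>
    mul_nonneg (hΦb0 l) (hhInt0 l)
  have hrange : ∀ n : ℕ, (∑ l ∈ Finset.range n,
      Φ (b l) * ∫ t in Set.Ioc (b (l+1)) (b l), h t) ≤ ∫ t in Set.Ioc (0:ℝ) 1, Φ t * h t := by
    intro n
    calc (∑ l ∈ Finset.range n, Φ (b l) * ∫ t in Set.Ioc (b (l+1)) (b l), h t)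
        ≤ ∑ l ∈ Finset.range n, ∫ t in Set.Ioc (b (l+1)) (b l), Φ t * h t :=
          Finset.sum_le_sum fun l _ => hupper l
      _ = _ := hpart n
      _ ≤ _ := hMb n
  have hsummable : Summable (fun l => Φ (b l) * ∫ t in Set.Ioc (b (l+1)) (b l), h t) :=
    summable_of_sum_range_le hT0 hrange
  have hub : (∑' l : ℕ, Φ (b l) * ∫ t in Set.Ioc (b (l+1)) (b l), h t) ≤
      ∫ t in Set.Ioc (0:ℝ) 1, Φ t * h t := Real.tsum_le_of_sum_range_le hT0 hrange
  refine ⟨?_, hub⟩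
  have hshift : Summable (fun l : ℕ => Φ (b (l+1)) * ∫ t in Set.Ioc (b (l+2)) (b (l+1)), h t) :=
    (summable_nat_add_iff 1).2 hsummable
  have hstep : ∀ n : ℕ, q * (∫ t in Set.Ioc (b n) (b 0), Φ t * h t) ≤
      ∑' l : ℕ, Φ (b l) * ∫ t in Set.Ioc (b (l+1)) (b l), h t := by
    intro n
    calc q * ∫ t in Set.Ioc (b n) (b 0), Φ t * h t
        = ∑ l ∈ Finset.range n, q * ∫ t in Set.Ioc (b (l+1)) (b l), Φ t * h t := by
          rw [← Finset.mul_sum, hpart n]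
      _ ≤ ∑ l ∈ Finset.range n, Φ (b (l+1)) * ∫ t in Set.Ioc (b (l+2)) (b (l+1)), h t :=
          Finset.sum_le_sum fun l _ => hlower l
      _ ≤ ∑' l : ℕ, Φ (b (l+1)) * ∫ t in Set.Ioc (b (l+2)) (b (l+1)), h t :=
          Summable.sum_le_tsum _ (fun l _ => hT0 (l+1)) hshift
      _ ≤ ∑' l : ℕ, Φ (b l) * ∫ t in Set.Ioc (b (l+1)) (b l), h t := by
          rw [Summable.tsum_eq_zero_add hsummable]
          exact le_add_of_nonneg_left (hT0 0)
  have hsUnion : (⋃ n : ℕ, Set.Ioc (b n) (b 0)) = Set.Ioc 0 (b 0) := by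
    ext x
    simp only [Set.mem_iUnion, Set.mem_Ioc]
    constructor
    · rintro ⟨n, h1, h2⟩; exact ⟨(hbpos n).trans h1, h2⟩
    · rintro ⟨hx0, hx1⟩
      obtain ⟨n, hn⟩ := (hb0.eventually_lt_const hx0).exists
      exact ⟨n, hn, hx1⟩
  have hmonoS : Monotone (fun n : ℕ => Set.Ioc (b n) (b 0)) := fun i j hij =>
    Set.Ioc_subset_Ioc_left (hbanti hij)
  have htendint : Filter.Tendsto (fun n : ℕ => ∫ t in Set.Ioc (b n) (b 0), Φ t * h t)
      Filter.atTop (nhds (∫ t in Set.Ioc (0:ℝ) (b 0), Φ t * h t)) := by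
    have := tendsto_setIntegral_of_monotone (μ := volume) (f := fun t => Φ t * h t)
      (fun i : ℕ => measurableSet_Ioc) hmonoS
      (by rw [hsUnion]; exact hFint.mono_set hsub0b)
    rwa [hsUnion] at this
  have hfinal1 : q * (∫ t in Set.Ioc (0:ℝ) (b 0), Φ t * h t) ≤
      ∑' l : ℕ, Φ (b l) * ∫ t in Set.Ioc (b (l+1)) (b l), h t :=
    le_of_tendsto (htendint.const_mul q) (Filter.Eventually.of_forall hstep)
  have hmon : (∫ t in Set.Ioc (0:ℝ) k, Φ t * h t) ≤ ∫ t in Set.Ioc (0:ℝ) (b 0), Φ t * h t :=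
    setIntegral_mono_set (hFint.mono_set hsub0b)
      ((ae_restrict_iff' measurableSet_Ioc).2 (ae_of_all _ fun t ht => hF0' t (hsub0b ht)))
      ((Set.Ioc_subset_Ioc le_rfl hkb).eventuallyLE)
  exact le_trans (mul_le_mul_of_nonneg_left hmon hq0.le) hfinal1

/-- Riemann-sum convergence step: the lower Riemann-type sums over the partition by the
points `(1-a)^{m_a+l}` have liminf, as `a → 0⁺`, at least `∫_0^k G((1/t)∫_0^t g) h`. -/
theorem stmt19 (g h : ℝ → ℝ)
    (hg0 : ∀ u ∈ Set.Ioc (0:ℝ) 1, 0 ≤ g u) (hgmono : AntitoneOn g (Set.Ioc 0 1))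
    (hgint : IntegrableOn g (Set.Ioc 0 1))
    (hh0 : ∀ u ∈ Set.Ioc (0:ℝ) 1, 0 ≤ h u) (hhmono : AntitoneOn h (Set.Ioc 0 1))
    (hhint : IntegrableOn h (Set.Ioc 0 1))
    (G : ℝ → ℝ) (hGmono : MonotoneOn G (Set.Ici 0)) (hG0 : ∀ x ≥ (0:ℝ), 0 ≤ G x)
    (k : ℝ) (hk : k ∈ Set.Ioc (0:ℝ) 1) (m : ℝ → ℕ)
    (hm : ∀ a ∈ Set.Ioo (0:ℝ) 1, (1 - a) ^ (m a + 1) ≤ k ∧ k < (1 - a) ^ (m a)) :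
    (∫ t in Set.Ioc (0:ℝ) k, G ((∫ u in Set.Ioc (0:ℝ) t, g u) / t) * h t) ≤
      Filter.liminf (fun a : ℝ =>
          ∑' l : ℕ, G ((∫ u in Set.Ioc (0:ℝ) ((1 - a) ^ (m a + l)), g u) / (1 - a) ^ (m a + l)) *
            ∫ t in Set.Ioc ((1 - a) ^ (m a + l + 1)) ((1 - a) ^ (m a + l)), h t)
        (nhdsWithin 0 (Set.Ioo 0 1)) := by
  have hk1 : 0 < k := hk.1
  set Φ : ℝ → ℝ := fun t => G ((∫ u in Set.Ioc (0:ℝ) t, g u) / t) with hΦdef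
  -- basic facts about the averages
  have havg0 : ∀ t ∈ Set.Ioc (0:ℝ) 1, 0 ≤ (∫ u in Set.Ioc (0:ℝ) t, g u) / t := by
    intro t ht
    exact div_nonneg (setIntegral_nonneg measurableSet_Ioc fun u hu =>
      hg0 u (Set.Ioc_subset_Ioc le_rfl ht.2 hu)) ht.1.le
  have havganti : ∀ s ∈ Set.Ioc (0:ℝ) 1, ∀ t ∈ Set.Ioc (0:ℝ) 1, s ≤ t →
      (∫ u in Set.Ioc (0:ℝ) t, g u) / t ≤ (∫ u in Set.Ioc (0:ℝ) s, g u) / s := by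
    intro s hs t ht hst
    have hs0 : 0 < s := hs.1
    have ht0 : 0 < t := ht.1
    have hsub1 : Set.Ioc (0:ℝ) s ⊆ Set.Ioc 0 1 := Set.Ioc_subset_Ioc le_rfl hs.2
    have hsub2 : Set.Ioc s t ⊆ Set.Ioc (0:ℝ) 1 := Set.Ioc_subset_Ioc hs0.le ht.2
    have hsplit : (∫ u in Set.Ioc (0:ℝ) t, g u) =
        (∫ u in Set.Ioc (0:ℝ) s, g u) + ∫ u in Set.Ioc s t, g u := by
      rw [← setIntegral_union (Set.Ioc_disjoint_Ioc_of_le le_rfl) measurableSet_Ioc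
        (hgint.mono_set hsub1) (hgint.mono_set hsub2),
        Set.Ioc_union_Ioc_eq_Ioc hs0.le hst]
    have hvol : ∀ {x y : ℝ}, x ≤ y → (volume (Set.Ioc x y)).toReal = y - x := by
      intro x y hxy; rw [Real.volume_Ioc, ENNReal.toReal_ofReal (by linarith)]
    have h1 : g s * s ≤ ∫ u in Set.Ioc (0:ℝ) s, g u := by
      have := setIntegral_mono_on (integrableOn_const measure_Ioc_lt_top.ne)
        (hgint.mono_set hsub1) measurableSet_Ioc
        (fun u hu => hgmono (hsub1 hu) hs hu.2)
      rwa [setIntegral_const, smul_eq_mul, measureReal_def, hvol hs0.le, sub_zero, mul_comm (s : ℝ)] at this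
    have h2 : (∫ u in Set.Ioc s t, g u) ≤ g s * (t - s) := by
      have := setIntegral_mono_on (hgint.mono_set hsub2)
        (integrableOn_const measure_Ioc_lt_top.ne) measurableSet_Ioc
        (fun u hu => hgmono hs (hsub2 hu) hu.1.le)
      rwa [setIntegral_const, smul_eq_mul, measureReal_def, hvol hst, mul_comm (t - s)] at this
    rw [div_le_div_iff₀ ht0 hs0, hsplit]
    nlinarith [h1, h2, hg0 s hs, sub_nonneg.2 hst]
  have hΦ0 : ∀ t ∈ Set.Ioc (0:ℝ) 1, 0 ≤ Φ t := fun t ht => hG0 _ (havg0 t ht)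
  have hΦanti : ∀ s ∈ Set.Ioc (0:ℝ) 1, ∀ t ∈ Set.Ioc (0:ℝ) 1, s ≤ t → Φ t ≤ Φ s :=
    fun s hs t ht hst => hGmono (havg0 t ht) (havg0 s hs) (havganti s hs t ht hst)
  have hF0 : ∀ t ∈ Set.Ioc (0:ℝ) 1, 0 ≤ Φ t * h t := fun t ht =>
    mul_nonneg (hΦ0 t ht) (hh0 t ht)
  -- nonnegativity of the sums
  have hS0 : ∀ a ∈ Set.Ioo (0:ℝ) 1, 0 ≤
      ∑' l : ℕ, G ((∫ u in Set.Ioc (0:ℝ) ((1 - a) ^ (m a + l)), g u) / (1 - a) ^ (m a + l)) *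
        ∫ t in Set.Ioc ((1 - a) ^ (m a + l + 1)) ((1 - a) ^ (m a + l)), h t := by
    intro a ha
    have ha0 : (0:ℝ) < 1 - a := by linarith [ha.2]
    have hb1 : ∀ n : ℕ, (1 - a) ^ n ∈ Set.Ioc (0:ℝ) 1 :=
      fun n => ⟨pow_pos ha0 n, pow_le_one₀ ha0.le (by linarith [ha.1])⟩
    refine tsum_nonneg fun l => mul_nonneg (hG0 _ (havg0 _ (hb1 _))) ?_
    refine setIntegral_nonneg measurableSet_Ioc fun t ht => hh0 t ?_
    exact Set.Ioc_subset_Ioc (hb1 (m a + l + 1)).1.le (hb1 (m a + l)).2 ht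
  by_cases hFk : IntegrableOn (fun t => Φ t * h t) (Set.Ioc 0 k)
  · -- integrable case
    have hsubk1 : Set.Ioc k 1 ⊆ Set.Ioc (0:ℝ) 1 := Set.Ioc_subset_Ioc hk1.le le_rfl
    have hFanti : AntitoneOn (fun t => Φ t * h t) (Set.Ioc k 1) := by
      intro s hs t ht hst
      have hs' := hsubk1 hs
      have ht' := hsubk1 ht
      exact mul_le_mul (hΦanti s hs' t ht' hst) (hhmono hs' ht' hst) (hh0 t ht') (hΦ0 s hs')
    have hFintk1 : IntegrableOn (fun t => Φ t * h t) (Set.Ioc k 1) := by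
      refine Integrable.mono' (g := fun _ => Φ k * h k)
        (integrableOn_const measure_Ioc_lt_top.ne)
        (aemeasurable_restrict_of_antitoneOn measurableSet_Ioc hFanti).aestronglyMeasurable
        ((ae_restrict_iff' measurableSet_Ioc).2 (ae_of_all _ fun t ht => ?_))
      rw [Real.norm_of_nonneg (hF0 t (hsubk1 ht))]
      have ht' := hsubk1 ht
      exact mul_le_mul (hΦanti k hk t ht' ht.1.le) (hhmono hk ht' ht.1.le)
        (hh0 t ht') (hΦ0 k hk)
    have hFint : IntegrableOn (fun t => Φ t * h t) (Set.Ioc 0 1) := by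
      rw [← Set.Ioc_union_Ioc_eq_Ioc hk1.le hk.2]
      exact hFk.union hFintk1
    have key : ∀ a ∈ Set.Ioo (0:ℝ) 1,
        ((1 - a) * (∫ t in Set.Ioc (0:ℝ) k, Φ t * h t) ≤
          ∑' l : ℕ, G ((∫ u in Set.Ioc (0:ℝ) ((1 - a) ^ (m a + l)), g u) / (1 - a) ^ (m a + l)) *
            ∫ t in Set.Ioc ((1 - a) ^ (m a + l + 1)) ((1 - a) ^ (m a + l)), h t) ∧
        (∑' l : ℕ, G ((∫ u in Set.Ioc (0:ℝ) ((1 - a) ^ (m a + l)), g u) / (1 - a) ^ (m a + l)) *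
            ∫ t in Set.Ioc ((1 - a) ^ (m a + l + 1)) ((1 - a) ^ (m a + l)), h t) ≤
          ∫ t in Set.Ioc (0:ℝ) 1, Φ t * h t := by
      intro a ha
      have ha0 : (0:ℝ) < 1 - a := by linarith [ha.2]
      have ha1 : (1:ℝ) - a < 1 := by linarith [ha.1]
      have hb1 : ∀ l : ℕ, (1 - a) ^ (m a + l) ∈ Set.Ioc (0:ℝ) 1 :=
        fun l => ⟨pow_pos ha0 _, pow_le_one₀ ha0.le ha1.le⟩
      have hbs : ∀ l : ℕ, (1 - a) ^ (m a + (l + 1)) = (1 - a) * (1 - a) ^ (m a + l) := by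
        intro l
        rw [← Nat.add_assoc, pow_succ, mul_comm]
      have hb0 : Filter.Tendsto (fun l : ℕ => (1 - a) ^ (m a + l)) Filter.atTop (nhds 0) := by
        have := (tendsto_pow_atTop_nhds_zero_of_lt_one ha0.le ha1).const_mul ((1 - a) ^ (m a))
        simpa [pow_add] using this
      have hkb : k ≤ (1 - a) ^ (m a + 0) := by
        simpa using (hm a ha).2.le
      have hcmp : ∀ l : ℕ, ∀ t ∈ Set.Ioc ((1 - a) ^ (m a + (l + 1))) ((1 - a) ^ (m a + l)),
          Φ ((1 - a) ^ (m a + l)) ≤ Φ t ∧ Φ t ≤ Φ ((1 - a) ^ (m a + (l + 1))) := by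
        intro l t ht
        have ht' : t ∈ Set.Ioc (0:ℝ) 1 :=
          Set.Ioc_subset_Ioc (hb1 (l + 1)).1.le (hb1 l).2 ht
        exact ⟨hΦanti t ht' _ (hb1 l) ht.2, hΦanti _ (hb1 (l + 1)) t ht' ht.1.le⟩
      have := aux_sum Φ h (fun l => (1 - a) ^ (m a + l)) (1 - a) k ha0 ha1 hb1 hbs hb0 hkb
        hΦ0 hh0 hhmono hhint hcmp hFint
      exact this
    haveI hne : (nhdsWithin (0:ℝ) (Set.Ioo 0 1)).NeBot := by
      rw [← mem_closure_iff_nhdsWithin_neBot, closure_Ioo (by norm_num : (0:ℝ) ≠ 1)]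
      exact ⟨le_rfl, by norm_num⟩
    have hCk : 0 ≤ ∫ t in Set.Ioc (0:ℝ) k, Φ t * h t :=
      setIntegral_nonneg measurableSet_Ioc fun t ht =>
        hF0 t (Set.Ioc_subset_Ioc le_rfl hk.2 ht)
    have htendu : Filter.Tendsto (fun a : ℝ => (1 - a) * ∫ t in Set.Ioc (0:ℝ) k, Φ t * h t)
        (nhdsWithin 0 (Set.Ioo 0 1)) (nhds (∫ t in Set.Ioc (0:ℝ) k, Φ t * h t)) := by
      have hcont : Filter.Tendsto (fun a : ℝ => (1 - a) * ∫ t in Set.Ioc (0:ℝ) k, Φ t * h t)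
          (nhds 0) (nhds ((1 - 0) * ∫ t in Set.Ioc (0:ℝ) k, Φ t * h t)) := by
        exact (Continuous.mul (continuous_const.sub continuous_id) continuous_const).tendsto 0
      simpa using hcont.mono_left nhdsWithin_le_nhds
    have hev : ∀ᶠ a in nhdsWithin (0:ℝ) (Set.Ioo 0 1),
        (1 - a) * (∫ t in Set.Ioc (0:ℝ) k, Φ t * h t) ≤
          ∑' l : ℕ, G ((∫ u in Set.Ioc (0:ℝ) ((1 - a) ^ (m a + l)), g u) / (1 - a) ^ (m a + l)) *
            ∫ t in Set.Ioc ((1 - a) ^ (m a + l + 1)) ((1 - a) ^ (m a + l)), h t :=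
      eventually_mem_nhdsWithin.mono fun a ha => (key a ha).1
    have hbu : Filter.IsBoundedUnder (· ≥ ·) (nhdsWithin (0:ℝ) (Set.Ioo 0 1))
        (fun a : ℝ => (1 - a) * ∫ t in Set.Ioc (0:ℝ) k, Φ t * h t) :=
      Filter.isBoundedUnder_of_eventually_ge
        (eventually_mem_nhdsWithin.mono fun a (ha : a ∈ Set.Ioo (0:ℝ) 1) =>
          mul_nonneg (by linarith [ha.2]) hCk)
    have hcob : Filter.IsCoboundedUnder (· ≥ ·) (nhdsWithin (0:ℝ) (Set.Ioo 0 1))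
        (fun a : ℝ =>
          ∑' l : ℕ, G ((∫ u in Set.Ioc (0:ℝ) ((1 - a) ^ (m a + l)), g u) / (1 - a) ^ (m a + l)) *
            ∫ t in Set.Ioc ((1 - a) ^ (m a + l + 1)) ((1 - a) ^ (m a + l)), h t) := by
      refine Filter.IsBoundedUnder.isCoboundedUnder_ge ?_
      exact Filter.isBoundedUnder_of_eventually_le
        (eventually_mem_nhdsWithin.mono fun a ha => (key a ha).2)
    calc (∫ t in Set.Ioc (0:ℝ) k, Φ t * h t)
        = Filter.liminf (fun a : ℝ => (1 - a) * ∫ t in Set.Ioc (0:ℝ) k, Φ t * h t)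
            (nhdsWithin 0 (Set.Ioo 0 1)) := (htendu.liminf_eq).symm
      _ ≤ _ := Filter.liminf_le_liminf hev hbu hcob
  · -- non-integrable case: the left-hand side is zero
    rw [integral_undef hFk]
    rw [Filter.liminf_eq]
    by_cases hbdd : BddAbove {c : ℝ | ∀ᶠ a in nhdsWithin (0:ℝ) (Set.Ioo 0 1), c ≤
        ∑' l : ℕ, G ((∫ u in Set.Ioc (0:ℝ) ((1 - a) ^ (m a + l)), g u) / (1 - a) ^ (m a + l)) *
          ∫ t in Set.Ioc ((1 - a) ^ (m a + l + 1)) ((1 - a) ^ (m a + l)), h t}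
    · exact le_csSup hbdd (eventually_mem_nhdsWithin.mono fun a ha => hS0 a ha)
    · rw [csSup_of_not_bddAbove hbdd, Real.sSup_empty]
end
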